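/- Let r₁, r, n be integers with 0 ≤ r₁ < r < n, and let I, J ⊂ {1,…,n} with |I| = |J| = r₁. Then there exists a matrix E ∈ F^{n×n} such that rank(E) = r − r₁, the matrix I_n + E is invertible, every row of E indexed by I is zero, and every column of E indexed by J is zero. -/
import Mathlib


/-- A polynomial matrix is a (matrix) pencil if every entry has degree at most 1. -/
def IsPencil {F : Type*} [Field F] {m n : ℕ} (M : Matrix (Fin m) (Fin n) (Polynomial F)) : Prop :=
  ∀ i j, (M i j).degree ≤ 1

/-- Normal rank of a polynomial matrix: its rank over the field of rational functions. -/
noncomputable def normalRank {F : Type*} [Field F] {m n : ℕ}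
    (M : Matrix (Fin m) (Fin n) (Polynomial F)) : ℕ :=
  (M.map (algebraMap (Polynomial F) (RatFunc F))).rank

/-- Strict equivalence of polynomial matrices (pencils):
`G = Q * H * R` for invertible constant matrices `Q`, `R`. -/
def StrictEquiv {F : Type*} [Field F] {m n : ℕ}
    (G H : Matrix (Fin m) (Fin n) (Polynomial F)) : Prop :=
  ∃ (Q : Matrix (Fin m) (Fin m) F) (R : Matrix (Fin n) (Fin n) F),
    IsUnit Q.det ∧ IsUnit R.det ∧ G = (Q.map Polynomial.C) * H * (R.map Polynomial.C)

/-- The pencil `G₀ + s G₁` as a polynomial matrix. -/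
noncomputable def pencilOf {F : Type*} [Field F] {m n : ℕ}
    (G₀ G₁ : Matrix (Fin m) (Fin n) F) : Matrix (Fin m) (Fin n) (Polynomial F) :=
  G₀.map Polynomial.C + (Polynomial.X : Polynomial F) • G₁.map Polynomial.C

/-- The homogeneous pencil `t G₀ + s G₁` (variables `s = X 0`, `t = X 1`). -/
noncomputable def homPencil {F : Type*} [Field F] {m n : ℕ}
    (G₀ G₁ : Matrix (Fin m) (Fin n) F) : Matrix (Fin m) (Fin n) (MvPolynomial (Fin 2) F) :=
  (MvPolynomial.X 1 : MvPolynomial (Fin 2) F) • G₀.map MvPolynomial.C +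
    (MvPolynomial.X 0 : MvPolynomial (Fin 2) F) • G₁.map MvPolynomial.C

/-- The set of `k × k` minors of a matrix. -/
def minorsSet {R : Type*} [CommRing R] {m n : ℕ} (M : Matrix (Fin m) (Fin n) R) (k : ℕ) :
    Set R :=
  { d | ∃ (ri : Fin k → Fin m) (ci : Fin k → Fin n),
      Function.Injective ri ∧ Function.Injective ci ∧ d = (M.submatrix ri ci).det }

/-- `g` is a greatest common divisor of the set `S`. -/
def IsGCDOf {R : Type*} [CommRing R] (g : R) (S : Set R) : Prop :=
  (∀ x ∈ S, g ∣ x) ∧ ∀ d : R, (∀ x ∈ S, d ∣ x) → d ∣ g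

/-- `φ 0, …, φ (n-1)` are homogeneous invariant factors (up to units) of the pencil
`G₀ + s G₁`: for each `k ≤ n` the product of the first `k` of them is a gcd of the
`k × k` minors of the homogeneous pencil `t G₀ + s G₁`. -/
def IsHomogeneousIF {F : Type*} [Field F] {n : ℕ} (G₀ G₁ : Matrix (Fin n) (Fin n) F)
    (φ : ℕ → MvPolynomial (Fin 2) F) : Prop :=
  ∀ k : ℕ, k ≤ n → IsGCDOf (∏ i ∈ Finset.range k, φ i) (minorsSet (homPencil G₀ G₁) k)

/-- Extension of a finite family of invariant factors (indexed `1, …, n`, stored with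
offset `1` so that `φ 0` is the first one) to all integer indices, with the convention
that it is `1` below the range and `0` above it. -/
def extIF {R : Type*} [CommRing R] (n : ℕ) (φ : ℕ → R) : ℤ → R :=
  fun j => if j < 1 then 1 else if (n : ℤ) < j then 0 else φ (j - 1).toNat

/-- Interlacing condition `φ_{i-r} ∣ ψ_i ∣ φ_{i+r}`, `1 ≤ i ≤ n`. -/
def Interlace {R : Type*} [CommRing R] (n r : ℕ) (φ ψ : ℕ → R) : Prop :=
  ∀ i : ℕ, 1 ≤ i → i ≤ n →
    extIF n φ ((i : ℤ) - r) ∣ extIF n ψ (i : ℤ) ∧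
      extIF n ψ (i : ℤ) ∣ extIF n φ ((i : ℤ) + r)

/-- The operation `P_X` on pencils, acting on the pair `(G₀, G₁)` of coefficients of
`G(s) = G₀ + s G₁`: for `X = [[x, y], [z, w]]`,
`P_X(s G₁ + G₀) = s (x G₁ + z G₀) + (y G₁ + w G₀)`. -/
def mapP {F : Type*} [Field F] {m n : ℕ} (X : Matrix (Fin 2) (Fin 2) F)
    (G : Matrix (Fin m) (Fin n) F × Matrix (Fin m) (Fin n) F) :
    Matrix (Fin m) (Fin n) F × Matrix (Fin m) (Fin n) F :=
  (X 0 1 • G.2 + X 1 1 • G.1, X 0 0 • G.2 + X 1 0 • G.1)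

/-- The substitution `Π_X(Φ)(s, t) = Φ(s x + t y, s z + t w)` for `X = [[x, y], [z, w]]`. -/
noncomputable def PiX {F : Type*} [Field F] (X : Matrix (Fin 2) (Fin 2) F)
    (Φ : MvPolynomial (Fin 2) F) : MvPolynomial (Fin 2) F :=
  MvPolynomial.aeval
    ![MvPolynomial.C (X 0 0) * MvPolynomial.X 0 + MvPolynomial.C (X 0 1) * MvPolynomial.X 1,
      MvPolynomial.C (X 1 0) * MvPolynomial.X 0 + MvPolynomial.C (X 1 1) * MvPolynomial.X 1] Φ

/-- The homogeneous invariant factor of a nonzero `1 × 1` pencil `a(s) = a₀ + s a₁`: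
the homogenization `t a₀ + s a₁`, made monic with respect to `s`
(equal to `t` when `a₁ = 0`). -/
noncomputable def homIF1 {F : Type*} [Field F] (a : Polynomial F) : MvPolynomial (Fin 2) F :=
  MvPolynomial.C (a.leadingCoeff)⁻¹ *
    (MvPolynomial.C (a.coeff 1) * MvPolynomial.X 0 + MvPolynomial.C (a.coeff 0) * MvPolynomial.X 1)

/-- The homogeneous pencil associated to a polynomial matrix pencil. -/
noncomputable def homOf {F : Type*} [Field F] {n : ℕ}
    (M : Matrix (Fin n) (Fin n) (Polynomial F)) : Matrix (Fin n) (Fin n) (MvPolynomial (Fin 2) F) :=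
  homPencil (M.map fun p => p.coeff 0) (M.map fun p => p.coeff 1)


section StmtThreeAux

open Matrix Function

lemma exists_enum {α : Type*} [DecidableEq α] {m : ℕ} {S : Finset α} (h : m ≤ S.card) :
    ∃ f : Fin m → α, Function.Injective f ∧ ∀ k, f k ∈ S := by
  obtain ⟨S', hsub, hcard⟩ := Finset.exists_subset_card_eq h
  refine ⟨fun k => (S'.equivFin.symm (Fin.cast hcard.symm k) : α), ?_, ?_⟩
  · intro a b hab
    have := S'.equivFin.symm.injective (Subtype.ext hab)
    simpa [Fin.ext_iff] using congrArg Fin.val this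
  · exact fun k => hsub (S'.equivFin.symm (Fin.cast hcard.symm k)).2

lemma snoc_injective {α : Type*} {m : ℕ} {f : Fin m → α} {x : α}
    (hf : Function.Injective f) (hx : ∀ k, f k ≠ x) :
    Function.Injective (Fin.snoc f x : Fin (m + 1) → α) := by
  intro k l h
  rcases Fin.eq_castSucc_or_eq_last k with ⟨k', rfl⟩ | rfl <;>
    rcases Fin.eq_castSucc_or_eq_last l with ⟨l', rfl⟩ | rfl
  · simp only [Fin.snoc_castSucc] at h
    exact congrArg Fin.castSucc (hf h)
  · simp only [Fin.snoc_castSucc, Fin.snoc_last] at h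
    exact absurd h (hx k')
  · simp only [Fin.snoc_castSucc, Fin.snoc_last] at h
    exact absurd h.symm (hx l')
  · rfl

lemma cons_injective' {α : Type*} {m : ℕ} {f : Fin m → α} {x : α}
    (hf : Function.Injective f) (hx : ∀ k, f k ≠ x) :
    Function.Injective (Fin.cons x f : Fin (m + 1) → α) := by
  intro k l h
  rcases Fin.eq_zero_or_eq_succ k with rfl | ⟨k', rfl⟩ <;>
    rcases Fin.eq_zero_or_eq_succ l with rfl | ⟨l', rfl⟩
  · rfl
  · simp only [Fin.cons_zero, Fin.cons_succ] at h
    exact absurd h.symm (hx l')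
  · simp only [Fin.cons_zero, Fin.cons_succ] at h
    exact absurd h (hx k')
  · simp only [Fin.cons_succ] at h
    exact congrArg Fin.succ (hf h)

lemma comb {α : Type*} [DecidableEq α] (m : ℕ) : ∀ S T : Finset α, m ≤ S.card → m ≤ T.card →
    m < (S ∪ T).card → ∃ f g : Fin m → α, Function.Injective f ∧ Function.Injective g ∧
      (∀ k, f k ∈ S) ∧ (∀ k, g k ∈ T) ∧ (∀ k l, g k = f l → k < l) := by
  induction m with
  | zero =>
    exact fun S T _ _ _ => ⟨Fin.elim0, Fin.elim0, fun a => a.elim0, fun a => a.elim0,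
      fun a => a.elim0, fun a => a.elim0, fun a => a.elim0⟩
  | succ m ih =>
    intro S T hS hT hU
    by_cases hd : ∀ x ∈ S, x ∉ T
    · obtain ⟨f, hfi, hfm⟩ := exists_enum hS
      obtain ⟨g, hgi, hgm⟩ := exists_enum hT
      exact ⟨f, g, hfi, hgi, hfm, hgm, fun k l h => absurd (hgm k) (h ▸ hd _ (hfm l))⟩
    push_neg at hd
    obtain ⟨x, hxS, hxT⟩ := hd
    by_cases hb : ∃ b ∈ T, b ∉ S
    · obtain ⟨b, hbT, hbS⟩ := hb
      have hcard1 : m ≤ (S.erase x).card := by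
        rw [Finset.card_erase_of_mem hxS]; omega
      have hcard2 : m ≤ (T.erase b).card := by
        rw [Finset.card_erase_of_mem hbT]; omega
      have hsub : (S ∪ T).erase b ⊆ (S.erase x) ∪ (T.erase b) := by
        intro y hy
        rw [Finset.mem_erase] at hy
        rcases Finset.mem_union.mp hy.2 with h | h
        · by_cases hyx : y = x
          · exact Finset.mem_union_right _ (Finset.mem_erase.mpr ⟨hy.1, hyx ▸ hxT⟩)
          · exact Finset.mem_union_left _ (Finset.mem_erase.mpr ⟨hyx, h⟩)
        · exact Finset.mem_union_right _ (Finset.mem_erase.mpr ⟨hy.1, h⟩)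
      have hcard3 : m < ((S.erase x) ∪ (T.erase b)).card := by
        have h1 := Finset.card_le_card hsub
        rw [Finset.card_erase_of_mem (Finset.mem_union_right _ hbT)] at h1
        omega
      obtain ⟨f', g', hfi, hgi, hfm, hgm, hP⟩ := ih _ _ hcard1 hcard2 hcard3
      refine ⟨Fin.snoc f' x, Fin.snoc g' b, ?_, ?_, ?_, ?_, ?_⟩
      · exact snoc_injective hfi fun k => (Finset.mem_erase.mp (hfm k)).1
      · exact snoc_injective hgi fun k => (Finset.mem_erase.mp (hgm k)).1
      · intro k
        rcases Fin.eq_castSucc_or_eq_last k with ⟨k', rfl⟩ | rfl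
        · simpa using Finset.mem_of_mem_erase (hfm k')
        · simpa using hxS
      · intro k
        rcases Fin.eq_castSucc_or_eq_last k with ⟨k', rfl⟩ | rfl
        · simpa using Finset.mem_of_mem_erase (hgm k')
        · simpa using hbT
      · intro k l h
        rcases Fin.eq_castSucc_or_eq_last k with ⟨k', rfl⟩ | rfl <;>
          rcases Fin.eq_castSucc_or_eq_last l with ⟨l', rfl⟩ | rfl
        · simp only [Fin.snoc_castSucc] at h
          exact Fin.castSucc_lt_castSucc_iff.mpr (hP _ _ h)
        · exact Fin.castSucc_lt_last k'
        · simp only [Fin.snoc_castSucc, Fin.snoc_last] at h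
          exact absurd (h ▸ Finset.mem_of_mem_erase (hfm l')) hbS
        · simp only [Fin.snoc_last] at h
          exact absurd (h ▸ hxS) hbS
    · push_neg at hb
      have hTS : T ⊆ S := hb
      have hST : S ∪ T = S := Finset.union_eq_left.mpr hTS
      rw [hST] at hU
      by_cases ha : ∃ a ∈ S, a ∉ T
      · obtain ⟨a, haS, haT⟩ := ha
        obtain ⟨b, hbT⟩ := Finset.card_pos.mp (by omega : 0 < T.card)
        have hcard1 : m ≤ (S.erase a).card := by rw [Finset.card_erase_of_mem haS]; omega
        have hcard2 : m ≤ (T.erase b).card := by rw [Finset.card_erase_of_mem hbT]; omega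
        have hcard3 : m < ((S.erase a) ∪ (T.erase b)).card := by
          have := Finset.card_le_card
            (Finset.subset_union_left : S.erase a ⊆ (S.erase a) ∪ (T.erase b))
          rw [Finset.card_erase_of_mem haS] at this
          omega
        obtain ⟨f', g', hfi, hgi, hfm, hgm, hP⟩ := ih _ _ hcard1 hcard2 hcard3
        refine ⟨Fin.cons a f', Fin.cons b g', ?_, ?_, ?_, ?_, ?_⟩
        · exact cons_injective' hfi fun k => (Finset.mem_erase.mp (hfm k)).1
        · exact cons_injective' hgi fun k => (Finset.mem_erase.mp (hgm k)).1
        · intro k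
          rcases Fin.eq_zero_or_eq_succ k with rfl | ⟨k', rfl⟩
          · simpa using haS
          · simpa using Finset.mem_of_mem_erase (hfm k')
        · intro k
          rcases Fin.eq_zero_or_eq_succ k with rfl | ⟨k', rfl⟩
          · simpa using hbT
          · simpa using Finset.mem_of_mem_erase (hgm k')
        · intro k l h
          rcases Fin.eq_zero_or_eq_succ k with rfl | ⟨k', rfl⟩ <;>
            rcases Fin.eq_zero_or_eq_succ l with rfl | ⟨l', rfl⟩
          · simp only [Fin.cons_zero] at h
            exact absurd (h ▸ hbT) haT
          · exact Fin.succ_pos l'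
          · simp only [Fin.cons_succ, Fin.cons_zero] at h
            exact absurd (h ▸ Finset.mem_of_mem_erase (hgm k')) haT
          · simp only [Fin.cons_succ] at h
            exact Fin.succ_lt_succ_iff.mpr (hP _ _ h)
      · push_neg at ha
        obtain ⟨e, hei, hem⟩ := exists_enum (show m + 2 ≤ S.card by omega)
        refine ⟨fun k => e k.castSucc, fun k => e k.succ, ?_, ?_, ?_, ?_, ?_⟩
        · exact fun a b h => Fin.castSucc_injective _ (hei h)
        · exact fun a b h => Fin.succ_injective _ (hei h)
        · exact fun k => hem _
        · exact fun k => ha _ (hem _)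
        · intro k l h
          have h2 := congrArg Fin.val (hei h)
          simp only [Fin.val_succ, Fin.coe_castSucc] at h2
          exact Fin.lt_def.mpr (by omega)

section
variable {F : Type*} [Field F] {n m : ℕ} (f g : Fin m → Fin n)

noncomputable def Amat (F : Type*) [Field F] {n m : ℕ} (f : Fin m → Fin n) : Matrix (Fin n) (Fin m) F :=
  Matrix.of fun i k => if f k = i then 1 else 0

noncomputable def Bmat (F : Type*) [Field F] {n m : ℕ} (g : Fin m → Fin n) : Matrix (Fin m) (Fin n) F :=
  Matrix.of fun k j => if g k = j then 1 else 0

lemma AtA (hf : Function.Injective f) :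
    (Amat F f)ᵀ * Amat F f = 1 := by
  ext k l
  simp only [Matrix.mul_apply, Matrix.transpose_apply, Amat, Matrix.of_apply,
    ite_mul, one_mul, zero_mul]
  rw [Finset.sum_ite_eq (Finset.univ) (f k) (fun i => if f l = i then (1:F) else 0)]
  simp [one_apply, hf.eq_iff, eq_comm]

lemma BBt (hg : Function.Injective g) :
    Bmat F g * (Bmat F g)ᵀ = 1 := by
  ext k l
  simp only [Matrix.mul_apply, Matrix.transpose_apply, Bmat, Matrix.of_apply,
    ite_mul, one_mul, zero_mul]
  rw [Finset.sum_ite_eq (Finset.univ) (g k) (fun i => if g l = i then (1:F) else 0)]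
  simp [one_apply, hg.eq_iff, eq_comm]

lemma BA_apply (k l : Fin m) :
    (Bmat F g * Amat F f) k l = if g k = f l then 1 else 0 := by
  simp only [Matrix.mul_apply, Bmat, Amat, Matrix.of_apply, ite_mul, one_mul, zero_mul]
  rw [Finset.sum_ite_eq (Finset.univ) (g k) (fun i => if f l = i then (1:F) else 0)]
  simp [eq_comm]

end

lemma matkey (F : Type*) [Field F] {n m : ℕ}
    (I J : Finset (Fin n))
    (f g : Fin m → Fin n) (hfi : Function.Injective f) (hgi : Function.Injective g)
    (hfm : ∀ k, f k ∉ I) (hgm : ∀ k, g k ∉ J) (hP : ∀ k l, g k = f l → k < l) :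
    ∃ E : Matrix (Fin n) (Fin n) F, E.rank = m ∧ IsUnit (1 + E).det ∧
      (∀ i ∈ I, ∀ j, E i j = 0) ∧ (∀ j ∈ J, ∀ i, E i j = 0) := by
  set A : Matrix (Fin n) (Fin m) F := Amat F f with hA
  set B : Matrix (Fin m) (Fin n) F := Bmat F g with hB
  set N : Matrix (Fin m) (Fin m) F := B * A with hN
  refine ⟨A * B, ?_, ?_, ?_, ?_⟩
  · -- rank
    refine le_antisymm ((rank_mul_le_left A B).trans ?_) ?_
    · exact (rank_le_card_width A).trans (by simp)
    · have h1 : Aᵀ * (A * B) * Bᵀ = 1 := by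
        rw [show Aᵀ * (A * B) * Bᵀ = (Aᵀ * A) * (B * Bᵀ) by
          simp only [Matrix.mul_assoc], AtA f hfi, BBt g hgi, one_mul]
      have h2 : ((1 : Matrix (Fin m) (Fin m) F)).rank ≤ (A * B).rank := by
        rw [← h1]
        exact (rank_mul_le_left _ _).trans (rank_mul_le_right _ _)
      simpa using h2
  · -- invertible
    have hNval : ∀ p : ℕ, ∀ k l : Fin m, (N ^ p) k l ≠ 0 → (k : ℕ) + p ≤ (l : ℕ) := by
      intro p
      induction p with
      | zero =>
        intro k l h
        rw [pow_zero] at h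
        rcases eq_or_ne k l with rfl | hne
        · omega
        · simp [one_apply, hne] at h
      | succ p ihp =>
        intro k l h
        rw [pow_succ, Matrix.mul_apply] at h
        obtain ⟨j, -, hj⟩ := Finset.exists_ne_zero_of_sum_ne_zero h
        obtain ⟨ha, hb⟩ := mul_ne_zero_iff.mp hj
        have h1 := ihp k j ha
        have h2 : (j : ℕ) < l := by
          rw [hN, BA_apply] at hb
          by_cases hgf : g j = f l
          · exact hP j l hgf
          · simp [hgf] at hb
        omega
    have hNm : N ^ m = 0 := by
      ext k l
      by_contra h
      have := hNval m k l h
      have := l.isLt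
      simp at this
      omega
    have hE : ∀ p : ℕ, (A * B) ^ (p + 1) = A * N ^ p * B := by
      intro p
      induction p with
      | zero => simp [pow_one]
      | succ p ihp =>
        rw [pow_succ, ihp, pow_succ, hN]
        simp only [Matrix.mul_assoc]
    have hnil : IsNilpotent (A * B) := ⟨m + 1, by rw [hE m, hNm, Matrix.mul_zero, Matrix.zero_mul]⟩
    exact (Matrix.isUnit_iff_isUnit_det _).mp hnil.isUnit_one_add
  · intro i hi j
    rw [Matrix.mul_apply]
    refine Finset.sum_eq_zero fun k _ => ?_
    have : f k ≠ i := fun h => hfm k (h.symm ▸ hi)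
    simp [hA, Amat, this]
  · intro j hj i
    rw [Matrix.mul_apply]
    refine Finset.sum_eq_zero fun k _ => ?_
    have : g k ≠ j := fun h => hgm k (h.symm ▸ hj)
    simp [hB, Bmat, this]

end StmtThreeAux

/-- Given `0 ≤ r₁ < r < n` and index sets `I, J` of cardinality `r₁`, there is a
matrix `E` with `rank E = r - r₁`, `I + E` invertible, the rows of `E` indexed by `I` zero and
the columns of `E` indexed by `J` zero. -/
theorem stmt3 (F : Type*) [Field F] (r₁ r n : ℕ) (h1 : r₁ < r) (h2 : r < n)
    (I J : Finset (Fin n)) (hI : I.card = r₁) (hJ : J.card = r₁) :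
    ∃ E : Matrix (Fin n) (Fin n) F, E.rank = r - r₁ ∧ IsUnit (1 + E).det ∧
      (∀ i ∈ I, ∀ j, E i j = 0) ∧ (∀ j ∈ J, ∀ i, E i j = 0) := by
  have hScard : (Iᶜ : Finset (Fin n)).card = n - r₁ := by
    rw [Finset.card_compl, hI, Fintype.card_fin]
  have hTcard : (Jᶜ : Finset (Fin n)).card = n - r₁ := by
    rw [Finset.card_compl, hJ, Fintype.card_fin]
  have hU : r - r₁ < ((Iᶜ : Finset (Fin n)) ∪ Jᶜ).card :=
    lt_of_lt_of_le (by omega : r - r₁ < n - r₁)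
      (hScard ▸ Finset.card_le_card Finset.subset_union_left)
  obtain ⟨f, g, hfi, hgi, hfm, hgm, hP⟩ :=
    comb (r - r₁) (Iᶜ : Finset (Fin n)) Jᶜ (by omega) (by omega) hU
  exact matkey F I J f g hfi hgi (fun k => Finset.mem_compl.mp (hfm k))
    (fun k => Finset.mem_compl.mp (hgm k)) hP
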